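/- Let m, n ∈ ℕ with n ≥ 1, let q_0, …, q_n be pairwise distinct real numbers, and let A ⊆ {0, …, n}^m be a nonempty downward closed set of multi-indices. Then for every function f : ℝ^m → ℝ there exists exactly one polynomial Q in the span Π_A = span{x ↦ x_1^{α_1}⋯x_m^{α_m} : α ∈ A} such that Q(p_α) = f(p_α) for all α ∈ A, where p_α = (q_{α_1}, …, q_{α_m}). -/
import Mathlib


/-- The monomial `x ↦ x^α = x_1^{α_1} ⋯ x_m^{α_m}` for a multi-index `α ∈ {0,…,n}^m`. -/
def monomial (m n : ℕ) (α : Fin m → Fin (n + 1)) : (Fin m → ℝ) → ℝ :=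
  fun x => ∏ i, x i ^ (α i : ℕ)

/-- The polynomial space `Π_A`, the span of the monomials with multi-indices in `A`. -/
def polySpace (m n : ℕ) (A : Finset (Fin m → Fin (n + 1))) :
    Submodule ℝ ((Fin m → ℝ) → ℝ) :=
  Submodule.span ℝ (monomial m n '' (A : Set (Fin m → Fin (n + 1))))

/-- The grid node `p_α = (q_{α_1}, …, q_{α_m})`. -/
def gridNode (m n : ℕ) (q : Fin (n + 1) → ℝ) (α : Fin m → Fin (n + 1)) : Fin m → ℝ :=
  fun i => q (α i)

/-- The tensor-product Lagrange-type function associated to a multi-index `α`. -/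
noncomputable def lagAux (m n : ℕ) (q : Fin (n + 1) → ℝ) (α : Fin m → Fin (n + 1)) :
    (Fin m → ℝ) → ℝ :=
  fun x => ∏ i, ∏ j ∈ Finset.Iio (α i), (x i - q j) / (q (α i) - q j)

lemma lagAux_self (m n : ℕ) (q : Fin (n + 1) → ℝ) (hq : Function.Injective q)
    (α : Fin m → Fin (n + 1)) : lagAux m n q α (gridNode m n q α) = 1 := by
  unfold lagAux gridNode
  refine Finset.prod_eq_one fun i _ => Finset.prod_eq_one fun j hj => ?_
  have hj' : j < α i := Finset.mem_Iio.mp hj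
  have hne : q (α i) - q j ≠ 0 := sub_ne_zero.mpr (fun h => absurd (hq h) (ne_of_gt hj'))
  exact div_self hne

lemma lagAux_zero (m n : ℕ) (q : Fin (n + 1) → ℝ) (α β : Fin m → Fin (n + 1))
    (i : Fin m) (h : β i < α i) : lagAux m n q α (gridNode m n q β) = 0 := by
  unfold lagAux gridNode
  refine Finset.prod_eq_zero (Finset.mem_univ i) ?_
  refine Finset.prod_eq_zero (Finset.mem_Iio.mpr h) ?_
  simp

lemma lagAux_mem (m n : ℕ) (q : Fin (n + 1) → ℝ) (A : Finset (Fin m → Fin (n + 1)))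
    (hdc : ∀ α ∈ A, ∀ β : Fin m → Fin (n + 1), (∀ i, (β i : ℕ) ≤ (α i : ℕ)) → β ∈ A)
    (α : Fin m → Fin (n + 1)) (hα : α ∈ A) :
    lagAux m n q α ∈ polySpace m n A := by
  set P : Fin m → Polynomial ℝ := fun i =>
    ∏ j ∈ Finset.Iio (α i), (Polynomial.C ((q (α i) - q j)⁻¹) * (Polynomial.X - Polynomial.C (q j)))
    with hP
  have hdeg : ∀ i, (P i).natDegree ≤ (α i : ℕ) := by
    intro i
    refine le_trans (Polynomial.natDegree_prod_le _ _) ?_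
    calc ∑ j ∈ Finset.Iio (α i),
          (Polynomial.C ((q (α i) - q j)⁻¹) * (Polynomial.X - Polynomial.C (q j))).natDegree
        ≤ ∑ _j ∈ Finset.Iio (α i), 1 := by
          refine Finset.sum_le_sum fun j _ => ?_
          refine le_trans (Polynomial.natDegree_mul_le) ?_
          simp [Polynomial.natDegree_X_sub_C]
      _ = (α i : ℕ) := by simp [Fin.card_Iio]
  have heval : ∀ i t, (P i).eval t = ∏ j ∈ Finset.Iio (α i), (t - q j) / (q (α i) - q j) := by
    intro i t
    rw [hP, Polynomial.eval_prod]
    refine Finset.prod_congr rfl fun j _ => ?_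
    simp [div_eq_inv_mul]
  have hfun : lagAux m n q α = ∑ g ∈ Fintype.piFinset (fun _ : Fin m => Finset.range (n + 1)),
      ((∏ i, (P i).coeff (g i)) • fun x : Fin m → ℝ => ∏ i, x i ^ (g i)) := by
    funext x
    rw [Finset.sum_apply]
    have h1 : lagAux m n q α x = ∏ i, (P i).eval (x i) := by
      unfold lagAux; exact (Finset.prod_congr rfl fun i _ => (heval i (x i)).symm)
    rw [h1]
    have h2 : ∀ i, (P i).eval (x i) = ∑ k ∈ Finset.range (n + 1), (P i).coeff k * (x i) ^ k := by
      intro i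
      exact Polynomial.eval_eq_sum_range' (lt_of_le_of_lt (hdeg i) (α i).isLt) _
    simp_rw [h2]
    rw [Finset.prod_univ_sum]
    refine Finset.sum_congr rfl fun g _ => ?_
    rw [Finset.prod_mul_distrib]
    simp
  rw [hfun]
  refine Submodule.sum_mem _ fun g hg => ?_
  by_cases hle : ∀ i, g i ≤ (α i : ℕ)
  · refine Submodule.smul_mem _ _ ?_
    have hβlt : ∀ i, g i < n + 1 := fun i => lt_of_le_of_lt (hle i) (α i).isLt
    have hβA : (fun i => (⟨g i, hβlt i⟩ : Fin (n + 1))) ∈ A := hdc α hα _ hle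
    apply Submodule.subset_span
    exact ⟨fun i => (⟨g i, hβlt i⟩ : Fin (n + 1)), hβA, rfl⟩
  · push_neg at hle
    obtain ⟨i, hi⟩ := hle
    have hc : (P i).coeff (g i) = 0 :=
      Polynomial.coeff_eq_zero_of_natDegree_lt (lt_of_le_of_lt (hdeg i) hi)
    rw [Finset.prod_eq_zero (Finset.mem_univ i) hc, zero_smul]
    exact Submodule.zero_mem _

/-- For pairwise distinct nodes `q_0, …, q_n` and a nonempty downward closed set `A` of
multi-indices, every function `f : ℝ^m → ℝ` admits exactly one polynomial `Q ∈ Π_A`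
interpolating `f` at the grid nodes `p_α`, `α ∈ A`. -/
theorem unisolvence_downward_closed (m n : ℕ) (hn : 1 ≤ n)
    (q : Fin (n + 1) → ℝ) (hq : Function.Injective q)
    (A : Finset (Fin m → Fin (n + 1))) (hA : A.Nonempty)
    (hdc : ∀ α ∈ A, ∀ β : Fin m → Fin (n + 1), (∀ i, (β i : ℕ) ≤ (α i : ℕ)) → β ∈ A)
    (f : (Fin m → ℝ) → ℝ) :
    ∃! Q : (Fin m → ℝ) → ℝ, Q ∈ polySpace m n A ∧
      ∀ α ∈ A, Q (gridNode m n q α) = f (gridNode m n q α) := by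
  classical
  haveI : Nonempty ↥(A : Finset (Fin m → Fin (n + 1))) := ⟨⟨hA.choose, hA.choose_spec⟩⟩
  -- evaluation linear map
  let E : ((Fin m → ℝ) → ℝ) →ₗ[ℝ] (↥A → ℝ) :=
    { toFun := fun Q β => Q (gridNode m n q β)
      map_add' := fun Q R => rfl
      map_smul' := fun c Q => rfl }
  let E' : ↥(polySpace m n A) →ₗ[ℝ] (↥A → ℝ) := E.comp (polySpace m n A).subtype
  let v : ↥A → (↥A → ℝ) := fun α => E (lagAux m n q α)
  -- linear independence of the evaluated Lagrange functions
  have hv_li : LinearIndependent ℝ v := by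
    rw [Fintype.linearIndependent_iff]
    intro c hc
    have key : ∀ N : ℕ, ∀ α : ↥A, (∑ i, ((α : Fin m → Fin (n + 1)) i : ℕ)) < N → c α = 0 := by
      intro N
      induction N with
      | zero => intro α h; omega
      | succ N ih =>
        intro α hαN
        have h1 : ∑ β : ↥A, c β * lagAux m n q β (gridNode m n q α) = 0 := by
          have := congrFun hc α
          simpa [Finset.sum_apply, v, E] using this
        rw [Finset.sum_eq_single α] at h1
        · rw [lagAux_self m n q hq, mul_one] at h1
          exact h1
        · intro β _ hβα
          by_cases hle : ∀ i, ((β : Fin m → Fin (n + 1)) i : ℕ) ≤ ((α : Fin m → Fin (n + 1)) i : ℕ)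
          · have hne : (β : Fin m → Fin (n + 1)) ≠ (α : Fin m → Fin (n + 1)) := by
              intro h; exact hβα (Subtype.ext h)
            obtain ⟨i, hi⟩ := Function.ne_iff.mp hne
            have hstrict : ((β : Fin m → Fin (n + 1)) i : ℕ) < ((α : Fin m → Fin (n + 1)) i : ℕ) := by
              rcases lt_or_eq_of_le (hle i) with h | h
              · exact h
              · exact absurd (Fin.ext h) hi
            have hwlt : (∑ i, ((β : Fin m → Fin (n + 1)) i : ℕ)) <
                ∑ i, ((α : Fin m → Fin (n + 1)) i : ℕ) :=
              Finset.sum_lt_sum (fun i _ => hle i) ⟨i, Finset.mem_univ i, hstrict⟩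
            rw [ih β (by omega), zero_mul]
          · push_neg at hle
            obtain ⟨i, hi⟩ := hle
            rw [lagAux_zero m n q _ _ i (by exact_mod_cast hi), mul_zero]
        · intro h; exact absurd (Finset.mem_univ α) h
    intro α
    exact key ((∑ i, ((α : Fin m → Fin (n + 1)) i : ℕ)) + 1) α (Nat.lt_succ_self _)
  -- they span the whole target space by dimension count
  have hcard : Fintype.card ↥A = Module.finrank ℝ (↥A → ℝ) := by
    simp [Module.finrank_pi]
  have hspan : Submodule.span ℝ (Set.range v) = ⊤ :=
    hv_li.span_eq_top_of_card_eq_finrank hcard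
  -- surjectivity of the evaluation on polySpace
  have hsurj : Function.Surjective E' := by
    rw [← LinearMap.range_eq_top, ← top_le_iff, ← hspan, Submodule.span_le]
    rintro _ ⟨α, rfl⟩
    exact ⟨⟨lagAux m n q α, lagAux_mem m n q A hdc α α.2⟩, rfl⟩
  -- finite dimensionality and dimension bound for polySpace
  haveI hfd : FiniteDimensional ℝ ↥(polySpace m n A) :=
    FiniteDimensional.span_of_finite ℝ ((A : Set (Fin m → Fin (n + 1))).toFinite.image _)
  have hrank : Module.finrank ℝ ↥(polySpace m n A) ≤ A.card := by
    have heq : polySpace m n A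
        = Submodule.span ℝ ((A.image (monomial m n) : Finset _) : Set _) := by
      rw [polySpace, Finset.coe_image]
    rw [heq]
    exact le_trans (finrank_span_finset_le_card _) Finset.card_image_le
  -- injectivity via rank-nullity
  have hker : LinearMap.ker E' = ⊥ := by
    have h1 := LinearMap.finrank_range_add_finrank_ker E'
    have h2 : Module.finrank ℝ ↥(LinearMap.range E') = A.card := by
      rw [LinearMap.range_eq_top.mpr hsurj, finrank_top]
      simp [Module.finrank_pi]
    have h3 : Module.finrank ℝ ↥(LinearMap.ker E') = 0 := by omega
    exact Submodule.finrank_eq_zero.mp h3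
  have hinj : Function.Injective E' := LinearMap.ker_eq_bot.mp hker
  -- conclude
  obtain ⟨P, hP⟩ := hsurj (fun β : ↥A => f (gridNode m n q β))
  refine ⟨(P : (Fin m → ℝ) → ℝ), ⟨P.2, fun α hα => congrFun hP ⟨α, hα⟩⟩, ?_⟩
  rintro Q ⟨hQmem, hQ⟩
  have hEq : E' ⟨Q, hQmem⟩ = E' P := by
    funext β
    show Q (gridNode m n q β) = (P : (Fin m → ℝ) → ℝ) (gridNode m n q β)
    rw [hQ β β.2]
    exact (congrFun hP β).symm
  exact congrArg Subtype.val (hinj hEq)
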